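/- Let n ≥ 2 and let f be a graph automorphism of the Hasse diagram of ∂Δⁿ. Then for every 0 ≤ i ≤ n−1, f maps the set H_i of i-dimensional simplices either onto H_i or onto H_{n−i−1}; moreover, which of the two cases occurs for every i is determined by whether f(H_0) = H_0 or f(H_0) = H_{n−1}. -/

import Mathlib

open Finset

/-- An abstract simplicial complex on vertex type `V`. -/
structure SComplex (V : Type) [DecidableEq V] where
  faces : Set (Finset V)
  nonempty_of_mem : ∀ {s : Finset V}, s ∈ faces → s.Nonempty
  down_closed : ∀ {s t : Finset V}, s ∈ faces → t ⊆ s → t.Nonempty → t ∈ faces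

variable {V : Type} [DecidableEq V]

/-- A primitive vector: a codimension-1 face pair of simplices of `K`. -/
def IsPrimitive (K : SComplex V) (p : Finset V × Finset V) : Prop :=
  p.1 ∈ K.faces ∧ p.2 ∈ K.faces ∧ p.1 ⊆ p.2 ∧ p.2.card = p.1.card + 1

/-- A discrete vector field on `K`. -/
def IsDVF (K : SComplex V) (W : Set (Finset V × Finset V)) : Prop :=
  (∀ p ∈ W, IsPrimitive K p) ∧
    ∀ p ∈ W, ∀ q ∈ W, p ≠ q →
      p.1 ≠ q.1 ∧ p.1 ≠ q.2 ∧ p.2 ≠ q.1 ∧ p.2 ≠ q.2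

/-- `W` admits a nontrivial closed `V`-path. -/
def HasClosedPath (W : Set (Finset V × Finset V)) : Prop :=
  ∃ (k : ℕ) (α β : ℕ → Finset V), 1 ≤ k ∧
    (∀ i < k, (α i, β i) ∈ W) ∧
    (∀ i < k, α (i + 1) ⊆ β i ∧ (β i).card = (α (i + 1)).card + 1 ∧ α (i + 1) ≠ α i) ∧
    α k = α 0

/-- A gradient vector field on `K`. -/
def IsGVF (K : SComplex V) (W : Set (Finset V × Finset V)) : Prop :=
  IsDVF K W ∧ ¬ HasClosedPath W

theorem IsGVF.mono {K : SComplex V} {W W' : Set (Finset V × Finset V)}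
    (h : IsGVF K W) (hsub : W' ⊆ W) : IsGVF K W' := by
  obtain ⟨⟨h1, h2⟩, h3⟩ := h
  refine ⟨⟨fun p hp => h1 p (hsub hp), fun p hp q hq hpq => h2 p (hsub hp) q (hsub hq) hpq⟩, ?_⟩
  rintro ⟨k, α, β, hk, hW, hrest, hclosed⟩
  exact h3 ⟨k, α, β, hk, fun i hi => hsub (hW i hi), hrest, hclosed⟩

/-- The vertices of the Morse complex of `K`: primitive vectors. -/
def MVert (K : SComplex V) : Type := {p : Finset V × Finset V // IsPrimitive K p}

instance (K : SComplex V) : DecidableEq (MVert K) :=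
  Subtype.instDecidableEq

/-- The Morse complex of `K`: simplices are gradient vector fields. -/
def morse (K : SComplex V) : SComplex (MVert K) where
  faces := {s : Finset (MVert K) | s.Nonempty ∧
    IsGVF K {p | ∃ x ∈ s, (x : {p : Finset V × Finset V // IsPrimitive K p}).val = p}}
  nonempty_of_mem := fun h => h.1
  down_closed := by
    rintro s t ⟨-, hgvf⟩ hts htne
    exact ⟨htne, hgvf.mono (by rintro p ⟨x, hx, rfl⟩; exact ⟨x, hts hx, rfl⟩)⟩

/-- The image of a primitive vector under a vertex map. -/
def indVert (e : V → V) (p : Finset V × Finset V) : Finset V × Finset V :=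
  (p.1.image e, p.2.image e)

/-- The automorphism group of a simplicial complex, as a subgroup of the
permutations of its vertex set. -/
def autK (K : SComplex V) : Subgroup (Equiv.Perm V) where
  carrier := {e | ∀ s : Finset V, s ∈ K.faces ↔ s.image e ∈ K.faces}
  one_mem' := by intro s; simp
  mul_mem' := by
    intro a b ha hb s
    rw [hb s]
    have : (s.image b).image a = s.image (a * b) := by
      rw [Finset.image_image]; rfl
    rw [ha (s.image b), this]
  inv_mem' := by
    intro a ha s
    have := ha (s.image ⇑(a⁻¹))
    have h2 : (s.image ⇑(a⁻¹)).image ⇑a = s := by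
      rw [Finset.image_image]
      simp [Function.comp_def]
    rw [h2] at this
    exact this.symm

/-- The Hasse diagram of `K`, as a simple graph on the simplices of `K`. -/
def hasse (K : SComplex V) : SimpleGraph {s : Finset V // s ∈ K.faces} where
  Adj σ τ := (σ.1 ⊆ τ.1 ∧ τ.1.card = σ.1.card + 1) ∨ (τ.1 ⊆ σ.1 ∧ σ.1.card = τ.1.card + 1)
  symm := by tauto
  loopless := ⟨by rintro σ (⟨-, h⟩ | ⟨-, h⟩) <;> omega⟩

/-- The automorphism group of a simple graph, as a subgroup of the permutations
of its vertex set. -/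
def autG {α : Type} (G : SimpleGraph α) : Subgroup (Equiv.Perm α) where
  carrier := {e | ∀ u v, G.Adj (e u) (e v) ↔ G.Adj u v}
  one_mem' := by intro u v; simp
  mul_mem' := by
    intro a b ha hb u v
    rw [show ((a * b : Equiv.Perm α) u) = a (b u) from rfl,
      show ((a * b : Equiv.Perm α) v) = a (b v) from rfl, ha, hb]
  inv_mem' := by
    intro a ha u v
    have := ha (a⁻¹ u) (a⁻¹ v)
    simpa using this.symm

/-- The boundary of the `n`-simplex: all nonempty proper subsets of the
`(n+1)`-element vertex set. -/
def bdSimplex (n : ℕ) : SComplex (Fin (n + 1)) where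
  faces := {s | s.Nonempty ∧ s ≠ Finset.univ}
  nonempty_of_mem := fun h => h.1
  down_closed := by
    rintro s t ⟨-, hs⟩ hts htne
    refine ⟨htne, fun h => hs ?_⟩
    subst h
    exact Finset.univ_subset_iff.mp hts

instance (n : ℕ) : DecidablePred (· ∈ (bdSimplex n).faces) :=
  fun s => inferInstanceAs (Decidable (s.Nonempty ∧ s ≠ Finset.univ))

/-- The vertices of the Hasse diagram of `∂Δⁿ`: the simplices of `∂Δⁿ`. -/
abbrev BdVert (n : ℕ) : Type := {s : Finset (Fin (n + 1)) // s ∈ (bdSimplex n).faces}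

instance (n : ℕ) : Fintype (BdVert n) := Subtype.fintype _

instance instHasseAdjDecidable (K : SComplex V) : DecidableRel (hasse K).Adj :=
  fun a b => inferInstanceAs
    (Decidable ((a.1 ⊆ b.1 ∧ b.1.card = a.1.card + 1) ∨ (b.1 ⊆ a.1 ∧ a.1.card = b.1.card + 1)))

/-- The `i`-th layer of the Hasse diagram of `∂Δⁿ`: the simplices of
dimension `i` (cardinality `i + 1`). -/
def Hset (n i : ℕ) : Set (BdVert n) := {v | v.val.card = i + 1}


section Aux

variable {n : ℕ}

lemma BdVert.card_pos' (v : BdVert n) : 1 ≤ v.val.card :=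
  Finset.card_pos.2 v.2.1

lemma BdVert.card_le' (v : BdVert n) : v.val.card ≤ n := by
  by_contra h
  push_neg at h
  have h2 : v.val.card ≤ n + 1 := by
    simpa [Finset.card_univ] using Finset.card_le_univ v.val
  exact v.2.2 (Finset.eq_univ_of_card _ (by rw [Fintype.card_fin]; omega))

lemma mem_bd_faces_of {s : Finset (Fin (n + 1))} (h1 : 1 ≤ s.card) (h2 : s.card ≤ n) :
    s ∈ (bdSimplex n).faces := by
  refine ⟨Finset.card_pos.1 h1, fun h => ?_⟩
  rw [h, Finset.card_univ, Fintype.card_fin] at h2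
  omega

lemma hasse_adj_iff {u v : BdVert n} :
    (hasse (bdSimplex n)).Adj u v ↔
      (u.1 ⊆ v.1 ∧ v.1.card = u.1.card + 1) ∨ (v.1 ⊆ u.1 ∧ u.1.card = v.1.card + 1) :=
  Iff.rfl

/-- down-neighbors -/
def dnbrs (v : BdVert n) : Finset (BdVert n) :=
  univ.filter fun w => w.val ⊆ v.val ∧ v.val.card = w.val.card + 1

/-- up-neighbors -/
def unbrs (v : BdVert n) : Finset (BdVert n) :=
  univ.filter fun w => v.val ⊆ w.val ∧ w.val.card = v.val.card + 1

lemma nbrs_eq (v : BdVert n) :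
    (hasse (bdSimplex n)).neighborFinset v = unbrs v ∪ dnbrs v := by
  ext w
  simp only [SimpleGraph.mem_neighborFinset, Finset.mem_union, dnbrs, unbrs,
    Finset.mem_filter, Finset.mem_univ, true_and]
  exact Iff.rfl

lemma nbrs_disj (v : BdVert n) : Disjoint (unbrs v) (dnbrs v) := by
  rw [Finset.disjoint_left]
  intro w h1 h2
  simp only [unbrs, dnbrs, Finset.mem_filter, Finset.mem_univ, true_and] at h1 h2
  omega

lemma dnbrs_empty (v : BdVert n) (h : v.val.card = 1) : dnbrs v = ∅ := by
  rw [Finset.eq_empty_iff_forall_notMem]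
  intro w hw
  simp only [dnbrs, Finset.mem_filter, Finset.mem_univ, true_and] at hw
  have := BdVert.card_pos' w
  omega

lemma unbrs_empty (v : BdVert n) (h : v.val.card = n) : unbrs v = ∅ := by
  rw [Finset.eq_empty_iff_forall_notMem]
  intro w hw
  simp only [unbrs, Finset.mem_filter, Finset.mem_univ, true_and] at hw
  have := BdVert.card_le' w
  omega

lemma min'_eq_of_eq_singleton {α : Type*} [LinearOrder α] {s : Finset α} {x : α}
    (hs : s.Nonempty) (h : s = {x}) : s.min' hs = x := by
  subst h
  exact Finset.min'_singleton x

lemma dnbrs_card (v : BdVert n) (h : 2 ≤ v.val.card) : (dnbrs v).card = v.val.card := by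
  have hne : ∀ w ∈ dnbrs v, (v.val \ w.val).Nonempty := by
    intro w hw
    simp only [dnbrs, Finset.mem_filter, Finset.mem_univ, true_and] at hw
    rw [← Finset.card_pos, Finset.card_sdiff_of_subset hw.1]
    omega
  have key : v.val.card = (dnbrs v).card := by
    refine Finset.card_bij'
      (fun x hx => (⟨v.val.erase x,
        mem_bd_faces_of
          (by have := Finset.card_erase_of_mem hx; omega)
          (le_trans (Finset.card_le_card (Finset.erase_subset _ _)) (BdVert.card_le' v))⟩ :
          BdVert n))
      (fun w hw => (v.val \ w.val).min' (hne w hw)) ?_ ?_ ?_ ?_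
    · intro x hx
      simp only [dnbrs, Finset.mem_filter, Finset.mem_univ, true_and]
      exact ⟨Finset.erase_subset _ _, by have := Finset.card_erase_of_mem hx; omega⟩
    · intro w hw
      exact (Finset.mem_sdiff.1 (Finset.min'_mem _ (hne w hw))).1
    · intro x hx
      have hsd : v.val \ (v.val.erase x) = {x} := by
        ext y
        simp only [Finset.mem_sdiff, Finset.mem_erase, Finset.mem_singleton]
        constructor
        · rintro ⟨hy, hy2⟩
          by_contra hcon
          exact hy2 ⟨hcon, hy⟩
        · rintro rfl
          exact ⟨hx, fun hh => hh.1 rfl⟩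
      exact min'_eq_of_eq_singleton _ hsd
    · intro w hw
      have hw2 := hw
      simp only [dnbrs, Finset.mem_filter, Finset.mem_univ, true_and] at hw2
      have hmem := Finset.mem_sdiff.1 (Finset.min'_mem _ (hne w hw))
      apply Subtype.ext
      show v.val.erase ((v.val \ w.val).min' (hne w hw)) = w.val
      have hsub : w.val ⊆ v.val.erase ((v.val \ w.val).min' (hne w hw)) := by
        intro y hy
        rw [Finset.mem_erase]
        refine ⟨fun hcontra => ?_, hw2.1 hy⟩
        rw [hcontra] at hy
        exact hmem.2 hy
      have hcard : (v.val.erase ((v.val \ w.val).min' (hne w hw))).card ≤ w.val.card := by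
        rw [Finset.card_erase_of_mem hmem.1]
        omega
      exact (Finset.eq_of_subset_of_card_le hsub hcard).symm
  omega

lemma unbrs_card (v : BdVert n) (h : v.val.card + 1 ≤ n) :
    (unbrs v).card = n + 1 - v.val.card := by
  have hcompl : (v.valᶜ).card = n + 1 - v.val.card := by
    rw [Finset.card_compl, Fintype.card_fin]
  have hne : ∀ w ∈ unbrs v, (w.val \ v.val).Nonempty := by
    intro w hw
    simp only [unbrs, Finset.mem_filter, Finset.mem_univ, true_and] at hw
    rw [← Finset.card_pos, Finset.card_sdiff_of_subset hw.1]
    omega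
  have key : (v.valᶜ).card = (unbrs v).card := by
    refine Finset.card_bij'
      (fun x hx => (⟨insert x v.val,
        mem_bd_faces_of
          (le_trans (BdVert.card_pos' v) (Finset.card_le_card (Finset.subset_insert _ _)))
          (by
            rw [Finset.card_insert_of_notMem (Finset.mem_compl.1 hx)]
            omega)⟩ : BdVert n))
      (fun w hw => (w.val \ v.val).min' (hne w hw)) ?_ ?_ ?_ ?_
    · intro x hx
      simp only [unbrs, Finset.mem_filter, Finset.mem_univ, true_and]
      refine ⟨Finset.subset_insert _ _, ?_⟩
      show (insert x v.val).card = v.val.card + 1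
      exact Finset.card_insert_of_notMem (Finset.mem_compl.1 hx)
    · intro w hw
      exact Finset.mem_compl.2 (Finset.mem_sdiff.1 (Finset.min'_mem _ (hne w hw))).2
    · intro x hx
      have hx' : x ∉ v.val := Finset.mem_compl.1 hx
      have hsd : (insert x v.val) \ v.val = {x} := by
        ext y
        simp only [Finset.mem_sdiff, Finset.mem_insert, Finset.mem_singleton]
        constructor
        · rintro ⟨hy | hy, hy2⟩
          · exact hy
          · exact absurd hy hy2
        · rintro rfl
          exact ⟨Or.inl rfl, hx'⟩
      exact min'_eq_of_eq_singleton _ hsd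
    · intro w hw
      have hw2 := hw
      simp only [unbrs, Finset.mem_filter, Finset.mem_univ, true_and] at hw2
      have hmem := Finset.mem_sdiff.1 (Finset.min'_mem _ (hne w hw))
      apply Subtype.ext
      show insert ((w.val \ v.val).min' (hne w hw)) v.val = w.val
      have hsub : insert ((w.val \ v.val).min' (hne w hw)) v.val ⊆ w.val :=
        Finset.insert_subset hmem.1 hw2.1
      have hcard : w.val.card ≤ (insert ((w.val \ v.val).min' (hne w hw)) v.val).card := by
        rw [Finset.card_insert_of_notMem hmem.2]
        omega
      exact Finset.eq_of_subset_of_card_le hsub hcard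
  omega

lemma degree_boundary (hn : 2 ≤ n) (v : BdVert n) (h : v.val.card = 1 ∨ v.val.card = n) :
    (hasse (bdSimplex n)).degree v = n := by
  rw [SimpleGraph.degree, nbrs_eq, Finset.card_union_of_disjoint (nbrs_disj v)]
  rcases h with h | h
  · rw [dnbrs_empty v h, unbrs_card v (by omega)]
    simp only [Finset.card_empty, h]
    omega
  · rw [unbrs_empty v h, dnbrs_card v (by omega)]
    simp only [Finset.card_empty, h]
    omega

lemma degree_middle (v : BdVert n) (h1 : 2 ≤ v.val.card) (h2 : v.val.card + 1 ≤ n) :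
    (hasse (bdSimplex n)).degree v = n + 1 := by
  rw [SimpleGraph.degree, nbrs_eq, Finset.card_union_of_disjoint (nbrs_disj v),
    unbrs_card v h2, dnbrs_card v h1]
  omega

lemma degree_aut (f : Equiv.Perm (BdVert n)) (hf : f ∈ autG (hasse (bdSimplex n)))
    (v : BdVert n) :
    (hasse (bdSimplex n)).degree (f v) = (hasse (bdSimplex n)).degree v := by
  have hf' : ∀ u w, (hasse (bdSimplex n)).Adj (f u) (f w) ↔ (hasse (bdSimplex n)).Adj u w := hf
  have himg : (hasse (bdSimplex n)).neighborFinset (f v) =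
      ((hasse (bdSimplex n)).neighborFinset v).image f := by
    ext w
    simp only [SimpleGraph.mem_neighborFinset, Finset.mem_image]
    constructor
    · intro h
      refine ⟨f.symm w, ?_, f.apply_symm_apply w⟩
      rw [← hf' v (f.symm w), f.apply_symm_apply]
      exact h
    · rintro ⟨u, hu, rfl⟩
      exact (hf' v u).2 hu
  rw [SimpleGraph.degree, SimpleGraph.degree, himg,
    Finset.card_image_of_injective _ f.injective]

/-- common neighbors -/
def cnbrs (u v : BdVert n) : Finset (BdVert n) :=
  univ.filter fun w => (hasse (bdSimplex n)).Adj u w ∧ (hasse (bdSimplex n)).Adj v w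

lemma cnbrs_aut (f : Equiv.Perm (BdVert n)) (hf : f ∈ autG (hasse (bdSimplex n)))
    (u v : BdVert n) : (cnbrs (f u) (f v)).card = (cnbrs u v).card := by
  have hf' : ∀ u w, (hasse (bdSimplex n)).Adj (f u) (f w) ↔ (hasse (bdSimplex n)).Adj u w := hf
  have himg : cnbrs (f u) (f v) = (cnbrs u v).image f := by
    ext w
    simp only [cnbrs, Finset.mem_filter, Finset.mem_univ, true_and, Finset.mem_image]
    constructor
    · intro h
      refine ⟨f.symm w, ⟨?_, ?_⟩, f.apply_symm_apply w⟩
      · rw [← hf' u (f.symm w), f.apply_symm_apply]; exact h.1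
      · rw [← hf' v (f.symm w), f.apply_symm_apply]; exact h.2
    · rintro ⟨x, hx, rfl⟩
      exact ⟨(hf' u x).2 hx.1, (hf' v x).2 hx.2⟩
  rw [himg, Finset.card_image_of_injective _ f.injective]

lemma cnbrs_two_singletons (hn : 2 ≤ n) {u v : BdVert n}
    (hu : u.val.card = 1) (hv : v.val.card = 1) (huv : u ≠ v) :
    (cnbrs u v).card = 1 := by
  obtain ⟨a, ha⟩ := Finset.card_eq_one.1 hu
  obtain ⟨b, hb⟩ := Finset.card_eq_one.1 hv
  have hab : a ≠ b := by
    rintro rfl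
    exact huv (Subtype.ext (ha.trans hb.symm))
  have hcard2 : ({a, b} : Finset (Fin (n + 1))).card = 2 := Finset.card_pair hab
  have hw0 : ({a, b} : Finset (Fin (n + 1))) ∈ (bdSimplex n).faces :=
    mem_bd_faces_of (by omega) (by omega)
  have hsingle : cnbrs u v = {⟨{a, b}, hw0⟩} := by
    ext w
    simp only [cnbrs, Finset.mem_filter, Finset.mem_univ, true_and, Finset.mem_singleton]
    constructor
    · rintro ⟨h1, h2⟩
      rcases h1 with ⟨hs1, hc1⟩ | ⟨hs1, hc1⟩
      swap
      · have := BdVert.card_pos' w; omega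
      rcases h2 with ⟨hs2, hc2⟩ | ⟨hs2, hc2⟩
      swap
      · have := BdVert.card_pos' w; omega
      have hsub : ({a, b} : Finset (Fin (n + 1))) ⊆ w.val := by
        apply Finset.insert_subset
        · exact hs1 (ha ▸ Finset.mem_singleton_self a)
        · rw [Finset.singleton_subset_iff]
          exact hs2 (hb ▸ Finset.mem_singleton_self b)
      apply Subtype.ext
      exact (Finset.eq_of_subset_of_card_le hsub (by omega)).symm
    · rintro rfl
      constructor
      · refine Or.inl ⟨?_, ?_⟩
        · show u.val ⊆ ({a, b} : Finset (Fin (n + 1)))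
          rw [ha]
          simp
        · show ({a, b} : Finset (Fin (n + 1))).card = u.val.card + 1
          omega
      · refine Or.inl ⟨?_, ?_⟩
        · show v.val ⊆ ({a, b} : Finset (Fin (n + 1)))
          rw [hb]
          simp
        · show ({a, b} : Finset (Fin (n + 1))).card = v.val.card + 1
          omega
  rw [hsingle, Finset.card_singleton]

lemma cnbrs_mixed (hn : 2 ≤ n) {u v : BdVert n}
    (hu : u.val.card = 1) (hv : v.val.card = n) :
    (cnbrs u v).card ≠ 1 := by
  intro h1
  obtain ⟨w, hw⟩ := Finset.card_eq_one.1 h1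
  have hwmem : w ∈ cnbrs u v := hw ▸ Finset.mem_singleton_self w
  simp only [cnbrs, Finset.mem_filter, Finset.mem_univ, true_and] at hwmem
  obtain ⟨h2, h3⟩ := hwmem
  rcases h2 with ⟨hs1, hc1⟩ | ⟨hs1, hc1⟩
  swap
  · have := BdVert.card_pos' w; omega
  rcases h3 with ⟨hs2, hc2⟩ | ⟨hs2, hc2⟩
  · have := BdVert.card_le' w; omega
  -- now u.val ⊆ w.val ⊆ v.val, card w.val = 2, so n = 3
  have hn3 : n = 3 := by omega
  have huv : u.val ⊆ v.val := hs1.trans hs2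
  have hsd : (v.val \ u.val).card = 2 := by
    rw [Finset.card_sdiff_of_subset huv]
    omega
  obtain ⟨x, hx, y, hy, hxy⟩ := Finset.one_lt_card.1 (by omega : 1 < (v.val \ u.val).card)
  rw [Finset.mem_sdiff] at hx hy
  have mkface : ∀ z : Fin (n + 1), z ∉ u.val → insert z u.val ∈ (bdSimplex n).faces := by
    intro z hz2
    refine mem_bd_faces_of
      (le_trans (BdVert.card_pos' u) (Finset.card_le_card (Finset.subset_insert _ _))) ?_
    rw [Finset.card_insert_of_notMem hz2]
    omega
  have mkmem : ∀ (z : Fin (n + 1)) (hz1 : z ∈ v.val) (hz2 : z ∉ u.val),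
      (⟨insert z u.val, mkface z hz2⟩ : BdVert n) ∈ cnbrs u v := by
    intro z hz1 hz2
    simp only [cnbrs, Finset.mem_filter, Finset.mem_univ, true_and]
    constructor
    · refine Or.inl ⟨Finset.subset_insert _ _, ?_⟩
      show (insert z u.val).card = u.val.card + 1
      exact Finset.card_insert_of_notMem hz2
    · refine Or.inr ⟨Finset.insert_subset hz1 huv, ?_⟩
      show v.val.card = (insert z u.val).card + 1
      rw [Finset.card_insert_of_notMem hz2]
      omega
  have hx' := mkmem x hx.1 hx.2
  have hy' := mkmem y hy.1 hy.2
  rw [hw, Finset.mem_singleton] at hx' hy'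
  have hins : insert x u.val = insert y u.val := congrArg Subtype.val (hx'.trans hy'.symm)
  apply hxy
  have hxmem : x ∈ insert y u.val := hins ▸ Finset.mem_insert_self x u.val
  rcases Finset.mem_insert.1 hxmem with h | h
  · exact h
  · exact absurd h hx.2

/-- complement map -/
def bdCompl (v : BdVert n) : BdVert n :=
  ⟨v.valᶜ, mem_bd_faces_of
    (by rw [Finset.card_compl, Fintype.card_fin]; have := BdVert.card_le' v; omega)
    (by rw [Finset.card_compl, Fintype.card_fin]; have := BdVert.card_pos' v; omega)⟩

lemma bdCompl_inj : Function.Injective (bdCompl (n := n)) := by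
  intro a b h
  apply Subtype.ext
  have h2 : a.valᶜ = b.valᶜ := congrArg Subtype.val h
  exact compl_injective h2

lemma bdCompl_card (v : BdVert n) : (bdCompl v).val.card = n + 1 - v.val.card := by
  show v.valᶜ.card = n + 1 - v.val.card
  rw [Finset.card_compl, Fintype.card_fin]

lemma bdCompl_image (i : ℕ) (hi : i + 1 ≤ n) :
    bdCompl '' Hset n i = Hset n (n - i - 1) := by
  ext w
  simp only [Set.mem_image, Hset, Set.mem_setOf_eq]
  constructor
  · rintro ⟨v, hv, rfl⟩
    rw [bdCompl_card]
    omega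
  · intro hw
    refine ⟨bdCompl w, ?_, ?_⟩
    · rw [bdCompl_card]
      have := BdVert.card_le' w
      omega
    · apply Subtype.ext
      show w.valᶜᶜ = w.val
      simp

lemma ncard_Hset_symm (i : ℕ) (hi : i + 1 ≤ n) :
    (Hset n i).ncard = (Hset n (n - i - 1)).ncard := by
  rw [← bdCompl_image i hi, Set.ncard_image_of_injective _ bdCompl_inj]

lemma perm_image_eq {X : Type} [Fintype X] (f : Equiv.Perm X) {A B : Set X}
    (h : ⇑f '' A ⊆ B) (hc : B.ncard ≤ A.ncard) : ⇑f '' A = B :=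
  Set.eq_of_subset_of_ncard_le h
    (by rwa [Set.ncard_image_of_injective _ f.injective]) (Set.toFinite B)

end Aux

/-- a graph automorphism `f` of the Hasse diagram of `∂Δⁿ`
(`n ≥ 2`) maps each layer `H_i` onto `H_i` or onto `H_{n-i-1}`, and which case
occurs for every `i` is determined by the image of `H_0`. -/
theorem hasse_aut_layers (n : ℕ) (hn : 2 ≤ n) (f : Equiv.Perm (BdVert n))
    (hf : f ∈ autG (hasse (bdSimplex n))) :
    (⇑f '' Hset n 0 = Hset n 0 ∨ ⇑f '' Hset n 0 = Hset n (n - 1)) ∧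
    (⇑f '' Hset n 0 = Hset n 0 → ∀ i ≤ n - 1, ⇑f '' Hset n i = Hset n i) ∧
    (⇑f '' Hset n 0 = Hset n (n - 1) → ∀ i ≤ n - 1, ⇑f '' Hset n i = Hset n (n - i - 1)) := by
  have hf' : ∀ u v, (hasse (bdSimplex n)).Adj (f u) (f v) ↔ (hasse (bdSimplex n)).Adj u v := hf
  have hA : ∀ v : BdVert n, v.val.card = 1 → (f v).val.card = 1 ∨ (f v).val.card = n := by
    intro v hv
    have hd : (hasse (bdSimplex n)).degree (f v) = n := by
      rw [degree_aut f hf v]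
      exact degree_boundary hn v (Or.inl hv)
    by_contra hcon
    push_neg at hcon
    have h1 := BdVert.card_pos' (f v)
    have h2 := BdVert.card_le' (f v)
    have := degree_middle (f v) (by omega) (by omega)
    omega
  have key1 : (∀ v ∈ Hset n 0, f v ∈ Hset n 0) →
      ∀ i, i ≤ n - 1 → ⇑f '' Hset n i = Hset n i := by
    intro h0 i
    induction i using Nat.strong_induction_on with
    | _ i IH =>
      intro hi
      have hsub : ⇑f '' Hset n i ⊆ Hset n i := by
        cases i with
        | zero =>
          rintro _ ⟨v, hv, rfl⟩
          exact h0 v hv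
        | succ j =>
          rintro _ ⟨v, hv, rfl⟩
          have hvc : v.val.card = j + 2 := hv
          obtain ⟨x, hx⟩ := v.2.1
          have huface : v.val.erase x ∈ (bdSimplex n).faces :=
            mem_bd_faces_of (by rw [Finset.card_erase_of_mem hx]; omega)
              (le_trans (Finset.card_le_card (Finset.erase_subset _ _)) (BdVert.card_le' v))
          set u : BdVert n := ⟨v.val.erase x, huface⟩ with hudef
          have huc : u.val.card = j + 1 := by
            show (v.val.erase x).card = j + 1
            rw [Finset.card_erase_of_mem hx]
            omega
          have hadj : (hasse (bdSimplex n)).Adj u v :=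
            Or.inl ⟨Finset.erase_subset _ _, by omega⟩
          have hadj2 := (hf' u v).2 hadj
          have hfu : (f u).val.card = j + 1 := by
            have hmem : f u ∈ Hset n j := by
              rw [← IH j (by omega) (by omega)]
              exact ⟨u, huc, rfl⟩
            exact hmem
          rcases hadj2 with ⟨hs, hc⟩ | ⟨hs, hc⟩
          · show (f v).val.card = j + 1 + 1
            omega
          · exfalso
            have hcfv : (f v).val.card = j := by omega
            cases j with
            | zero =>
              have := BdVert.card_pos' (f v)
              omega
            | succ m =>
              have hfvm : f v ∈ Hset n m := hcfv
              rw [← IH m (by omega) (by omega)] at hfvm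
              obtain ⟨v', hv', heq⟩ := hfvm
              have hv'v : v' = v := f.injective heq
              subst hv'v
              have : v'.val.card = m + 1 := hv'
              omega
      exact perm_image_eq f hsub le_rfl
  have key2 : (∀ v ∈ Hset n 0, f v ∈ Hset n (n - 1)) →
      ∀ i, i ≤ n - 1 → ⇑f '' Hset n i = Hset n (n - i - 1) := by
    intro h0 i
    induction i using Nat.strong_induction_on with
    | _ i IH =>
      intro hi
      have hsub : ⇑f '' Hset n i ⊆ Hset n (n - i - 1) := by
        cases i with
        | zero =>
          rintro _ ⟨v, hv, rfl⟩
          have hm : (f v).val.card = n - 1 + 1 := h0 v hv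
          show (f v).val.card = n - 0 - 1 + 1
          omega
        | succ j =>
          rintro _ ⟨v, hv, rfl⟩
          have hvc : v.val.card = j + 2 := hv
          obtain ⟨x, hx⟩ := v.2.1
          have huface : v.val.erase x ∈ (bdSimplex n).faces :=
            mem_bd_faces_of (by rw [Finset.card_erase_of_mem hx]; omega)
              (le_trans (Finset.card_le_card (Finset.erase_subset _ _)) (BdVert.card_le' v))
          set u : BdVert n := ⟨v.val.erase x, huface⟩ with hudef
          have huc : u.val.card = j + 1 := by
            show (v.val.erase x).card = j + 1
            rw [Finset.card_erase_of_mem hx]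
            omega
          have hadj : (hasse (bdSimplex n)).Adj u v :=
            Or.inl ⟨Finset.erase_subset _ _, by omega⟩
          have hadj2 := (hf' u v).2 hadj
          have hfu : (f u).val.card = n - j := by
            have hmem : f u ∈ Hset n (n - j - 1) := by
              rw [← IH j (by omega) (by omega)]
              exact ⟨u, huc, rfl⟩
            have : (f u).val.card = n - j - 1 + 1 := hmem
            omega
          rcases hadj2 with ⟨hs, hc⟩ | ⟨hs, hc⟩
          · exfalso
            have h2 := BdVert.card_le' (f v)
            cases j with
            | zero => omega
            | succ m =>
              have hfvm : f v ∈ Hset n (n - m - 1) := by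
                show (f v).val.card = n - m - 1 + 1
                omega
              rw [← IH m (by omega) (by omega)] at hfvm
              obtain ⟨v', hv', heq⟩ := hfvm
              have hv'v : v' = v := f.injective heq
              subst hv'v
              have : v'.val.card = m + 1 := hv'
              omega
          · show (f v).val.card = n - (j + 1) - 1 + 1
            omega
      exact perm_image_eq f hsub (le_of_eq (ncard_Hset_symm i (by omega)).symm)
  have hcases : (∀ v ∈ Hset n 0, f v ∈ Hset n 0) ∨ (∀ v ∈ Hset n 0, f v ∈ Hset n (n - 1)) := by
    by_cases hex : ∃ v, v ∈ Hset n 0 ∧ (f v).val.card = n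
    · right
      intro u hu
      obtain ⟨v, hv, hfv⟩ := hex
      rcases hA u hu with h1 | h1
      · exfalso
        have hne : u ≠ v := by
          intro h
          subst h
          omega
        have hc1 : (cnbrs u v).card = 1 := cnbrs_two_singletons hn hu hv hne
        have hc2 : (cnbrs (f u) (f v)).card ≠ 1 := cnbrs_mixed hn h1 hfv
        rw [cnbrs_aut f hf u v] at hc2
        exact hc2 hc1
      · show (f u).val.card = n - 1 + 1
        omega
    · left
      intro v hv
      rcases hA v hv with h1 | h1
      · exact h1
      · exact absurd ⟨v, hv, h1⟩ hex
  refine ⟨?_, ?_, ?_⟩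
  · rcases hcases with h | h
    · left
      exact key1 h 0 (by omega)
    · right
      have := key2 h 0 (by omega)
      simpa using this
  · intro h0 i hi
    refine key1 ?_ i hi
    intro v hv
    rw [← h0]
    exact ⟨v, hv, rfl⟩
  · intro h0 i hi
    refine key2 ?_ i hi
    intro v hv
    rw [← h0]
    exact ⟨v, hv, rfl⟩
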